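/- Every invertible n×n matrix M over GF(2) can be reduced to a permutation matrix by a sequence of n 'fan-out' operations, where the i-th fan-out adds (mod 2) the i-th column c_i simultaneously to all other columns c_j having a 1 in row σ_i, with σ_i the index of the first nonzero entry of c_i at that stage. Consequently, M equals a permutation matrix times a product of n such fan-out column operations. -/

import Mathlib

def fanoutMatrix (n : ℕ) (c : Fin n) (T : Finset (Fin n)) : Matrix (Fin n) (Fin n) (ZMod 2) :=
  1 + ∑ j ∈ T, Matrix.single c j 1

namespace FanoutAux
variable {n : ℕ}

lemma nonzero_eq_one : ∀ x : ZMod 2, x ≠ 0 → x = 1 := by decide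

lemma fanout_apply (c : Fin n) (T : Finset (Fin n)) (a b : Fin n) :
    fanoutMatrix n c T a b
      = (if a = b then 1 else 0) + (if a = c ∧ b ∈ T then 1 else 0) := by
  simp only [fanoutMatrix, Matrix.add_apply, Matrix.one_apply, Matrix.sum_apply,
    Matrix.single, Matrix.of_apply]
  congr 1
  by_cases hac : c = a
  · subst hac
    simp [Finset.sum_ite_eq' T b (fun _ => (1:ZMod 2))]
  · rw [if_neg (fun h => hac h.1.symm)]
    simp [hac]

lemma mul_fanout_apply (A : Matrix (Fin n) (Fin n) (ZMod 2)) (c : Fin n)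
    (T : Finset (Fin n)) (a b : Fin n) :
    (A * fanoutMatrix n c T) a b = A a b + if b ∈ T then A a c else 0 := by
  simp only [Matrix.mul_apply, fanout_apply, mul_add]
  rw [Finset.sum_add_distrib]
  congr 1
  · simp [mul_ite, Finset.sum_ite_eq' Finset.univ b A]
  · by_cases hb : b ∈ T
    · simp [hb, mul_ite, Finset.sum_ite_eq' Finset.univ c A]
    · simp [hb]

lemma fanout_mul_self (c : Fin n) (T : Finset (Fin n)) (hc : c ∉ T) :
    fanoutMatrix n c T * fanoutMatrix n c T = 1 := by
  ext a b
  rw [mul_fanout_apply, fanout_apply, Matrix.one_apply]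
  by_cases hb : b ∈ T
  · rw [if_pos hb, fanout_apply]
    have hcb : ¬c = b := fun h => hc (h ▸ hb)
    have hbc : ¬b = c := fun h => hc (h ▸ hb)
    rcases eq_or_ne a c with rfl | hac
    · simp only [hcb, if_false, if_pos rfl, true_and, if_pos hb, hc, and_false]
      decide
    · simp [hac]
  · simp [hb]

lemma isUnit_fanout (c : Fin n) (T : Finset (Fin n)) (hc : c ∉ T) :
    IsUnit (fanoutMatrix n c T) :=
  ⟨⟨fanoutMatrix n c T, fanoutMatrix n c T, fanout_mul_self c T hc,
    fanout_mul_self c T hc⟩, rfl⟩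

lemma prod_mul_reverse_prod (L : List (Fin n × Finset (Fin n)))
    (h : ∀ p ∈ L, p.1 ∉ p.2) :
    (L.map fun p => fanoutMatrix n p.1 p.2).prod *
      (L.reverse.map fun p => fanoutMatrix n p.1 p.2).prod = 1 := by
  induction L with
  | nil => simp
  | cons a t ih =>
    have ha := fanout_mul_self a.1 a.2 (h a List.mem_cons_self)
    have ht := ih (fun p hp => h p (List.mem_cons_of_mem a hp))
    simp only [List.map_cons, List.prod_cons, List.reverse_cons, List.map_append,
      List.prod_append, List.map_cons, List.map_nil, List.prod_cons, List.prod_nil, mul_one]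
    calc fanoutMatrix n a.1 a.2 * (t.map fun p => fanoutMatrix n p.1 p.2).prod *
          ((t.reverse.map fun p => fanoutMatrix n p.1 p.2).prod * fanoutMatrix n a.1 a.2)
        = fanoutMatrix n a.1 a.2 *
          (((t.map fun p => fanoutMatrix n p.1 p.2).prod *
            (t.reverse.map fun p => fanoutMatrix n p.1 p.2).prod) * fanoutMatrix n a.1 a.2) := by
          noncomm_ring
      _ = 1 := by rw [ht, one_mul, ha]

lemma ofFn_eq_map (l : List (Fin n × Finset (Fin n))) (hl : l.length = n) :
    (List.ofFn fun i : Fin n =>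
        fanoutMatrix n (l.get (Fin.cast hl.symm i)).1 (l.get (Fin.cast hl.symm i)).2)
      = l.map fun p => fanoutMatrix n p.1 p.2 := by
  apply List.ext_getElem
  · simp [hl]
  · intro i h1 h2
    simp

lemma step_all : ∀ (m k : ℕ), k + m = n →
    ∀ A : Matrix (Fin n) (Fin n) (ZMod 2), IsUnit A.det →
    ∀ s : Fin n → Fin n,
    (∀ j : Fin n, (j:ℕ) < k → ∀ b, A (s j) b = if b = j then 1 else 0) →
    ∃ (s' : Fin n → Fin n) (L : List (Fin n × Finset (Fin n))),
      L.length = m ∧ (∀ p ∈ L, p.1 ∉ p.2) ∧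
      (∀ j b, (A * (L.map fun p => fanoutMatrix n p.1 p.2).prod) (s' j) b
          = if b = j then 1 else 0) := by
  intro m
  induction m with
  | zero =>
    intro k hk A hA s hs
    refine ⟨s, [], rfl, by simp, ?_⟩
    intro j b
    simpa using hs j (by omega) b
  | succ m ih =>
    intro k hk A hA s hs
    have hkn : k < n := by omega
    set jk : Fin n := ⟨k, hkn⟩ with hjk
    have hcol : ∃ r, A r jk ≠ 0 := by
      by_contra h
      push_neg at h
      have hz : A.det = 0 := Matrix.det_eq_zero_of_column_eq_zero jk (fun i => h i)
      rw [hz] at hA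
      exact absurd hA (by simp)
    obtain ⟨r, hr⟩ := hcol
    have hr1 : A r jk = 1 := nonzero_eq_one _ hr
    set T : Finset (Fin n) := Finset.univ.filter (fun j => j ≠ jk ∧ A r j = 1) with hT
    have hcT : jk ∉ T := by simp [hT]
    set A' := A * fanoutMatrix n jk T with hA'
    have hA'app : ∀ a b, A' a b = A a b + if b ∈ T then A a jk else 0 :=
      fun a b => mul_fanout_apply A jk T a b
    have hA'det : IsUnit A'.det := by
      rw [hA', Matrix.det_mul]
      exact hA.mul ((Matrix.isUnit_iff_isUnit_det _).1 (isUnit_fanout jk T hcT))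
    set s1 := Function.update s jk r with hs1
    have hinv' : ∀ j : Fin n, (j:ℕ) < k + 1 → ∀ b, A' (s1 j) b = if b = j then 1 else 0 := by
      intro j hj b
      rcases eq_or_ne j jk with rfl | hjne
      · rw [hs1, Function.update_self, hA'app]
        by_cases hbT : b ∈ T
        · have hb' : b ≠ jk ∧ A r b = 1 := by simpa [hT] using hbT
          rw [if_pos hbT, hb'.2, hr1, if_neg hb'.1]
          decide
        · rw [if_neg hbT, add_zero]
          rcases eq_or_ne b jk with rfl | hbne
          · rw [hr1, if_pos rfl]
          · rw [if_neg hbne]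
            by_contra hne
            exact hbT (by simp [hT, hbne, nonzero_eq_one _ hne])
      · have hjk' : (j:ℕ) < k := by
          rcases Nat.lt_succ_iff_lt_or_eq.1 hj with h | h
          · exact h
          · exact absurd (Fin.ext h) hjne
        rw [hs1, Function.update_of_ne hjne, hA'app]
        have hz : A (s j) jk = 0 := by
          rw [hs j hjk' jk, if_neg (fun hh : jk = j => hjne (by exact (hh.symm ▸ rfl)))]
        rw [hs j hjk' b]
        by_cases hbT : b ∈ T <;> simp [hbT, hz]
    obtain ⟨s', L', hlen, hmem, hfin⟩ := ih (k+1) (by omega) A' hA'det s1 hinv'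
    refine ⟨s', (jk, T) :: L', by simp [hlen], ?_, ?_⟩
    · intro p hp
      rcases List.mem_cons.1 hp with rfl | hp
      · exact hcT
      · exact hmem p hp
    · intro j b
      have heq : A * ((((jk, T) :: L').map fun p => fanoutMatrix n p.1 p.2).prod)
          = A' * ((L'.map fun p => fanoutMatrix n p.1 p.2).prod) := by
        simp [hA', List.prod_cons, Matrix.mul_assoc]
      rw [heq]
      exact hfin j b

end FanoutAux

theorem invertible_eq_perm_mul_fanouts (n : ℕ) (M : Matrix (Fin n) (Fin n) (ZMod 2))
    (hM : IsUnit M.det) :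
    ∃ (σ : Equiv.Perm (Fin n)) (c : Fin n → Fin n) (T : Fin n → Finset (Fin n)),
      (∀ i, c i ∉ T i) ∧
      M = Matrix.of (fun i j : Fin n => if σ j = i then (1 : ZMod 2) else 0) *
            (List.ofFn fun i : Fin n => fanoutMatrix n (c i) (T i)).prod := by
  obtain ⟨s', L, hlen, hmem, hfin⟩ :=
    FanoutAux.step_all n 0 (by omega) M hM (fun i => i) (fun j hj => absurd hj (by omega))
  have hinj : Function.Injective s' := by
    intro j j' h
    have h1 := hfin j j
    have h2 := hfin j' j
    rw [if_pos rfl] at h1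
    rw [h] at h1
    rw [h1] at h2
    by_contra hne
    rw [if_neg hne] at h2
    exact absurd h2 (by decide)
  let σ : Equiv.Perm (Fin n) := Equiv.ofBijective s' (Finite.injective_iff_bijective.1 hinj)
  have hB : Matrix.of (fun i j : Fin n => if σ j = i then (1 : ZMod 2) else 0)
      = M * (L.map fun p => fanoutMatrix n p.1 p.2).prod := by
    ext i b
    obtain ⟨j0, rfl⟩ := σ.surjective i
    have hrow : (M * (L.map fun p => fanoutMatrix n p.1 p.2).prod) (σ j0) b
        = if b = j0 then 1 else 0 := hfin j0 b
    rw [Matrix.of_apply, hrow]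
    simp [Equiv.apply_eq_iff_eq]
  have hlr : L.reverse.length = n := by simp [hlen]
  refine ⟨σ, fun i => (L.reverse.get (Fin.cast hlr.symm i)).1,
    fun i => (L.reverse.get (Fin.cast hlr.symm i)).2, ?_, ?_⟩
  · intro i
    exact hmem _ (List.mem_reverse.1 (List.get_mem L.reverse _))
  · rw [FanoutAux.ofFn_eq_map L.reverse hlr, hB, Matrix.mul_assoc,
      FanoutAux.prod_mul_reverse_prod L hmem, Matrix.mul_one]
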